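/- If n is odd, then for any sequence (a_1, …, a_n) of real numbers, some cyclic permutation of (a_1, …, a_n) is a slice. -/

import Mathlib

/-- Condition (ASC): all even-length initial alternating sums are ≤ 0. -/
def ASC (l : List ℝ) : Prop :=
  ∀ k : ℕ, 1 ≤ k → 2 * k ≤ l.length → (l.take (2 * k)).alternatingSum ≤ 0

/-- A slice: odd length, and both the sequence and its reverse satisfy (ASC). -/
def IsSlice (l : List ℝ) : Prop := Odd l.length ∧ ASC l ∧ ASC l.reverse

/-- An ev-sequence: even length, satisfying (ASC). -/
def IsEvSeq (l : List ℝ) : Prop := Even l.length ∧ ASC l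

private lemma altSum_append' (l₁ l₂ : List ℝ) :
    (l₁ ++ l₂).alternatingSum
      = l₁.alternatingSum + (-1:ℝ) ^ l₁.length * l₂.alternatingSum := by
  rw [List.alternatingSum_append, zsmul_eq_mul]
  push_cast
  ring

private lemma altSum_seg (l : List ℝ) (k j : ℕ) (hk : k ≤ l.length) :
    ((l.drop k).take j).alternatingSum
      = (-1:ℝ) ^ k * ((l.take (k + j)).alternatingSum - (l.take k).alternatingSum) := by
  have h := altSum_append' (l.take k) ((l.drop k).take j)
  rw [← List.take_add, List.length_take, min_eq_left hk] at h
  have hs : (-1:ℝ) ^ k * (-1:ℝ) ^ k = 1 := by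
    rw [← pow_add]; exact Even.neg_one_pow ⟨k, rfl⟩
  rw [h, add_sub_cancel_left, ← mul_assoc, hs, one_mul]

private lemma altSum_reverse_even (l : List ℝ) (hev : Even l.length) :
    l.reverse.alternatingSum = - l.alternatingSum := by
  rw [List.alternatingSum_reverse]
  obtain ⟨r, hr⟩ := hev
  have : (-1:ℤ) ^ (l.length + 1) = -1 := Odd.neg_one_pow ⟨r, by omega⟩
  rw [this]
  simp

/-- For odd n, some cyclic permutation of any sequence (a_1,…,a_n) is a slice. -/
theorem odd_cyclic_permutation_slice (a : List ℝ) (h : Odd a.length) :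
    ∃ k : ℕ, k < a.length ∧ IsSlice (a.drop k ++ a.take k) := by
  set n := a.length with hn
  have hodd : Odd a.length := hn ▸ h
  have npos : 0 < n := h.pos
  set c : List ℝ := a ++ a ++ a with hc
  have hclen : c.length = 3 * n := by rw [hc]; simp [List.length_append]; omega
  -- prefix of length n is a
  -- shift relation
  have hTshift : ∀ j, j ≤ 2 * n →
      (c.take (n + j)).alternatingSum = a.alternatingSum - (c.take j).alternatingSum := by
    intro j hj
    have h1 : c.take (n + j) = a ++ c.take j := by
      rw [hc, List.append_assoc, List.take_append]
      congr 1
      · exact List.take_of_length_le (by omega)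
      · rw [show n + j - a.length = j from by omega, ← List.append_assoc]
        exact (List.take_append_of_le_length (by simp; omega)).symm
    rw [h1, altSum_append', Odd.neg_one_pow hodd]
    ring
  have hTper : ∀ j, j ≤ n →
      (c.take (2 * n + j)).alternatingSum = (c.take j).alternatingSum := by
    intro j hj
    rw [show 2 * n + j = n + (n + j) from by ring, hTshift _ (by omega),
      hTshift _ (by omega)]
    ring
  obtain ⟨p, hp, hmax⟩ := Finset.exists_max_image (Finset.range n)
    (fun q => (c.take (2 * q)).alternatingSum) ⟨0, Finset.mem_range.mpr npos⟩
  rw [Finset.mem_range] at hp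
  have hmax' : ∀ q, q < n →
      (c.take (2 * q)).alternatingSum ≤ (c.take (2 * p)).alternatingSum :=
    fun q hq => hmax q (Finset.mem_range.mpr hq)
  have key1 : ∀ m, 2 * m ≤ n →
      (c.take (2 * p + 2 * m)).alternatingSum ≤ (c.take (2 * p)).alternatingSum := by
    intro m hm
    by_cases hpm : p + m < n
    · rw [show 2 * p + 2 * m = 2 * (p + m) from by ring]
      exact hmax' _ hpm
    · rw [show 2 * p + 2 * m = 2 * n + 2 * (p + m - n) from by omega,
        hTper _ (by omega)]
      exact hmax' _ (by omega)
  have key2 : ∀ m, 1 ≤ m → 2 * m ≤ n →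
      (c.take (2 * p + n)).alternatingSum
        ≤ (c.take (2 * p + (n - 2 * m))).alternatingSum := by
    intro m hm1 hm2
    have hA : (c.take (2 * p + n)).alternatingSum
        = a.alternatingSum - (c.take (2 * p)).alternatingSum := by
      rw [show 2 * p + n = n + 2 * p from by ring, hTshift _ (by omega)]
    by_cases hmp : m ≤ p
    · rw [hA, show 2 * p + (n - 2 * m) = n + 2 * (p - m) from by omega,
        hTshift _ (by omega)]
      have := hmax' (p - m) (by omega)
      linarith
    · have h2 := hTshift (2 * p + (n - 2 * m)) (by omega)
      rw [show n + (2 * p + (n - 2 * m)) = 2 * (n + p - m) from by omega] at h2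
      have h3 := hmax' (n + p - m) (by omega)
      linarith
  -- the rotation identities
  have rot0 : ∀ j, j ≤ n → (c.drop j).take n = a.drop j ++ a.take j := by
    intro j hj
    have h1 : c.drop j = a.drop j ++ (a ++ a) := by
      rw [hc, List.append_assoc, List.drop_append_of_le_length (by omega)]
    rw [h1, List.take_append,
      List.take_of_length_le (by rw [List.length_drop]; omega), List.length_drop]
    congr 1
    rw [show n - (a.length - j) = j from by omega]
    exact List.take_append_of_le_length (by omega)
  have rot1 : ∀ j, j ≤ n → (c.drop (n + j)).take n = a.drop j ++ a.take j := by
    intro j hj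
    have h1 : c.drop (n + j) = a.drop j ++ a := by
      rw [hc, List.drop_append_of_le_length (by simp; omega)]
      congr 1
      rw [show n + j = a.length + j from by omega]
      simp [List.drop_append]
    rw [h1, List.take_append,
      List.take_of_length_le (by rw [List.length_drop]; omega), List.length_drop]
    congr 1
    rw [show n - (a.length - j) = j from by omega]
  suffices hS : IsSlice ((c.drop (2 * p)).take n) by
    by_cases hc2 : 2 * p < n
    · exact ⟨2 * p, hc2, by rwa [rot0 (2 * p) (by omega)] at hS⟩
    · refine ⟨2 * p - n, by omega, ?_⟩
      have h1 := rot1 (2 * p - n) (by omega)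
      rw [show n + (2 * p - n) = 2 * p from by omega] at h1
      rwa [h1] at hS
  have hlen : ((c.drop (2 * p)).take n).length = n := by
    simp only [List.length_take, List.length_drop, hclen]
    omega
  refine ⟨by rw [hlen]; exact h, ?_, ?_⟩
  · intro m hm1 hm2
    rw [hlen] at hm2
    rw [List.take_take, show (2 * m) ⊓ n = 2 * m from min_eq_left hm2,
      altSum_seg c (2 * p) (2 * m) (by rw [hclen]; omega),
      show ((-1:ℝ) ^ (2 * p)) = 1 from Even.neg_one_pow ⟨p, by ring⟩, one_mul,
      sub_nonpos]
    exact key1 m hm2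
  · intro m hm1 hm2
    rw [List.length_reverse, hlen] at hm2
    have hev : Even ((((c.drop (2 * p)).take n).drop (n - 2 * m)).length) := by
      rw [List.length_drop, hlen]
      exact ⟨m, by omega⟩
    rw [List.take_reverse, hlen, altSum_reverse_even _ hev]
    have e2 : ((c.drop (2 * p)).take n).drop (n - 2 * m)
        = (c.drop (2 * p + (n - 2 * m))).take (2 * m) := by
      rw [List.drop_take, List.drop_drop]
      congr 1
      omega
    obtain ⟨t, ht⟩ := h
    rw [e2, altSum_seg c _ (2 * m) (by rw [hclen]; omega),
      show ((-1:ℝ) ^ (2 * p + (n - 2 * m))) = -1 from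
        Odd.neg_one_pow ⟨p + t - m, by omega⟩,
      show 2 * p + (n - 2 * m) + 2 * m = 2 * p + n from by omega]
    have hk2 := key2 m hm1 hm2
    linarith
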